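/- Let $(B_l)_{l\in\mathbb{N}}$ be a sequence of Banach spaces with $B_{l+1} \subseteq B_l$ and continuous embeddings $B_{l+1} \hookrightarrow B_l$ for every $l$, such that $\bigcap_{\mu\in\mathbb{N}} B_\mu$ is dense in each $B_l$. Let $R\colon B_0 \to B_0$ be a linear operator with $R(B_l)\subseteq B_l$ such that $R|_{B_l}$ is a compact endomorphism of $B_l$ for each $l$. Then $\ker(I+R) \subseteq \bigcap_{l\in\mathbb{N}} B_l$. -/

import Mathlib

set_option linter.unusedVariables false
set_option linter.unusedSectionVars false
set_option maxHeartbeats 1000000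

open Function Set Metric Filter Topology FiniteDimensional

noncomputable section FredholmTheory

lemma one_add_apply0 {X : Type*} [NormedAddCommGroup X] [NormedSpace ℝ X]
    (S : X →L[ℝ] X) (x : X) : (1 + S) x = x + S x := by
  simp [ContinuousLinearMap.add_apply]


variable {X : Type*} [NormedAddCommGroup X] [NormedSpace ℝ X]

/-- Normalized Riesz lemma inside a closed subspace. -/
lemma riesz_in [CompleteSpace X] (W F : Submodule ℝ X) (hWc : IsClosed (W : Set X))
    (hFc : IsClosed (F : Set X)) (hFW : F ≤ W) (hne : ∃ x ∈ W, x ∉ F) :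
    ∃ x ∈ W, ‖x‖ = 1 ∧ ∀ y ∈ F, (1:ℝ)/2 ≤ ‖x - y‖ := by
  haveI : CompleteSpace W := hWc.completeSpace_coe
  set F' : Submodule ℝ W := F.comap W.subtype with hF'
  have hF'c : IsClosed (F' : Set W) := by
    have : (F' : Set W) = (Subtype.val) ⁻¹' (F : Set X) := rfl
    rw [this]; exact hFc.preimage continuous_subtype_val
  obtain ⟨x, hxW, hxF⟩ := hne
  have hne' : ∃ z : W, z ∉ F' := ⟨⟨x, hxW⟩, by simpa [hF'] using hxF⟩
  obtain ⟨x₀, hx₀F, hx₀⟩ := riesz_lemma (𝕜 := ℝ) hF'c hne' (r := 1/2) (by norm_num)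
  have hx₀ne : (x₀ : X) ≠ 0 := by
    intro h
    have : x₀ = 0 := Subtype.coe_injective (by simpa using h)
    exact hx₀F (by rw [this]; exact F'.zero_mem)
  have hnorm : ‖(x₀ : X)‖ ≠ 0 := norm_ne_zero_iff.mpr hx₀ne
  have hnorm' : (0:ℝ) < ‖(x₀ : X)‖ := lt_of_le_of_ne (norm_nonneg _) (Ne.symm hnorm)
  refine ⟨‖(x₀ : X)‖⁻¹ • (x₀ : X), W.smul_mem _ x₀.2, ?_, ?_⟩
  · rw [norm_smul, norm_inv, norm_norm, inv_mul_cancel₀ hnorm]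
  · intro y hyF
    have hy' : (⟨‖(x₀ : X)‖ • y, W.smul_mem _ (hFW hyF)⟩ : W) ∈ F' := by
      simpa [hF'] using F.smul_mem ‖(x₀ : X)‖ hyF
    have hb := hx₀ _ hy'
    have hval : ‖x₀ - (⟨‖(x₀ : X)‖ • y, W.smul_mem _ (hFW hyF)⟩ : W)‖
        = ‖(x₀ : X) - ‖(x₀ : X)‖ • y‖ := rfl
    rw [hval] at hb
    have key : ‖(x₀:X)‖⁻¹ • (x₀:X) - y = ‖(x₀:X)‖⁻¹ • ((x₀:X) - ‖(x₀:X)‖ • y) := by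
      rw [smul_sub, smul_smul, inv_mul_cancel₀ hnorm, one_smul]
    rw [key, norm_smul, norm_inv, norm_norm, le_inv_mul_iff₀ hnorm']
    calc ‖(x₀:X)‖ * (1/2) = 1/2 * ‖(x₀:X)‖ := by ring
    _ ≤ _ := hb



variable {X : Type*} [NormedAddCommGroup X] [NormedSpace ℝ X]

lemma no_sep_seq (S : X →L[ℝ] X) (hS : IsCompactOperator ⇑S) (x : ℕ → X)
    (hb : ∀ n, ‖x n‖ ≤ 1) (hsep : ∀ m n, m < n → (1:ℝ)/2 ≤ ‖S (x m) - S (x n)‖) : False := by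
  obtain ⟨K, hK, hSK⟩ := hS.image_subset_compact_of_bounded (S := Metric.closedBall 0 1)
    isBounded_closedBall
  have hmem : ∀ n, S (x n) ∈ K := fun n => hSK ⟨x n, by simpa [mem_closedBall, dist_eq_norm] using hb n, rfl⟩
  obtain ⟨a, _, φ, hφ, hconv⟩ := hK.tendsto_subseq hmem
  have hcauchy := hconv.cauchySeq
  rw [Metric.cauchySeq_iff] at hcauchy
  obtain ⟨N, hN⟩ := hcauchy (1/2) (by norm_num)
  have h1 := hN (N+1) (by omega) N (by omega)
  have hlt : φ N < φ (N+1) := hφ (by omega)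
  have := hsep _ _ hlt
  rw [dist_comm, dist_eq_norm] at h1
  simp only [Function.comp] at h1
  linarith

lemma infDist_sub_mem (K : Submodule ℝ X) (x z : X) (hz : z ∈ K) :
    infDist (x - z) (K : Set X) = infDist x (K : Set X) := by
  have hiso : Isometry (fun y : X => y - z) := Isometry.of_dist_eq (by
    intro a b; rw [dist_eq_norm, dist_eq_norm]; abel_nf)
  have himg : (fun y : X => y - z) '' (K : Set X) = (K : Set X) := by
    ext w; constructor
    · rintro ⟨y, hy, rfl⟩; exact K.sub_mem hy hz
    · intro hw; exact ⟨w + z, K.add_mem hw hz, by show w + z - z = w; abel⟩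
  have := infDist_image (x := x) (t := (K : Set X)) hiso
  rw [himg] at this
  exact this

lemma infDist_smul_le (K : Submodule ℝ X) (y : X) (d : ℝ) (hd : 0 < d) :
    infDist (d • y) (K : Set X) ≤ d * infDist y (K : Set X) := by
  have hne : (K : Set X).Nonempty := ⟨0, K.zero_mem⟩
  apply le_of_forall_pos_le_add
  intro ε hε
  obtain ⟨y', hy', hdy'⟩ := (infDist_lt_iff hne).mp
    (show infDist y (K : Set X) < infDist y (K : Set X) + ε/d by linarith [show (0:ℝ) < ε/d by positivity])
  calc infDist (d • y) (K : Set X) ≤ dist (d • y) (d • y') :=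
        infDist_le_dist_of_mem (K.smul_mem d hy')
  _ = d * dist y y' := by
      rw [dist_eq_norm, dist_eq_norm, ← smul_sub, norm_smul, Real.norm_eq_abs, abs_of_pos hd]
  _ ≤ d * (infDist y (K : Set X) + ε/d) := mul_le_mul_of_nonneg_left hdy'.le hd.le
  _ = d * infDist y (K : Set X) + ε := by field_simp

lemma infDist_smul (K : Submodule ℝ X) (x : X) (c : ℝ) (hc : 0 < c) :
    infDist (c • x) (K : Set X) = c * infDist x (K : Set X) := by
  apply le_antisymm (infDist_smul_le K x c hc)
  have h2 := infDist_smul_le K (c • x) c⁻¹ (by positivity)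
  rw [inv_smul_smul₀ (ne_of_gt hc)] at h2
  have h3 : c * infDist x (K : Set X) ≤ c * (c⁻¹ * infDist (c • x) (K : Set X)) :=
    mul_le_mul_of_nonneg_left h2 (le_of_lt hc)
  rwa [← mul_assoc, mul_inv_cancel₀ (ne_of_gt hc), one_mul] at h3

section C

variable {X : Type*} [NormedAddCommGroup X] [NormedSpace ℝ X]

lemma crp_pow (S : X →L[ℝ] X) (hS : IsCompactOperator ⇑S) (n : ℕ) :
    ∃ S' : X →L[ℝ] X, IsCompactOperator ⇑S' ∧ (1 + S)^n = 1 + S' := by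
  induction n with
  | zero => exact ⟨0, isCompactOperator_zero, by simp⟩
  | succ n ih =>
    obtain ⟨S', hS', hpow⟩ := ih
    refine ⟨S + S' + S' * S, ?_, ?_⟩
    · have h1 : ⇑(S + S' + S' * S) = ⇑S + ⇑S' + (⇑S' ∘ ⇑S) := by
        funext x
        simp [ContinuousLinearMap.add_apply, ContinuousLinearMap.mul_apply]
      rw [h1]
      exact (hS.add hS').add (hS'.comp_clm S)
    · rw [pow_succ, hpow]; noncomm_ring

section
variable [CompleteSpace X]


lemma one_add_bounded_below (S : X →L[ℝ] X) (hS : IsCompactOperator ⇑S) :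
    ∃ c : ℝ, 0 < c ∧ ∀ x : X,
      c * infDist x ((LinearMap.ker ((1 + S : X →L[ℝ] X) : X →ₗ[ℝ] X) : Submodule ℝ X) : Set X)
        ≤ ‖(1 + S : X →L[ℝ] X) x‖ := by
  set T := (1 + S : X →L[ℝ] X) with hT
  set K := (LinearMap.ker (T : X →ₗ[ℝ] X) : Submodule ℝ X) with hK
  have hne : (K : Set X).Nonempty := ⟨0, K.zero_mem⟩
  by_contra h
  push_neg at h
  -- build normalized bad sequence
  have hw : ∀ k : ℕ, ∃ w : X, ‖w‖ = 1 ∧ (1:ℝ)/2 ≤ infDist w (K : Set X) ∧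
      ‖T w‖ ≤ 1/(k+1) := by
    intro k
    obtain ⟨x, hx⟩ := h (1/(k+1)) (by positivity)
    have hTx : (0:ℝ) ≤ ‖T x‖ := norm_nonneg _
    set d := infDist x (K : Set X) with hd
    have hdpos : 0 < d := by
      by_contra hdn
      push_neg at hdn
      have : (1/(k+1):ℝ) * d ≤ 0 := mul_nonpos_of_nonneg_of_nonpos (by positivity) hdn
      linarith
    obtain ⟨z, hzK, hz⟩ := (infDist_lt_iff hne).mp (show d < 2*d by linarith)
    set v := x - z with hv
    have hTv : T v = T x := by
      rw [hv, map_sub, (show T z = 0 from LinearMap.mem_ker.mp hzK), sub_zero]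
    have hdv : infDist v (K : Set X) = d := infDist_sub_mem K x z hzK
    have hvd : d ≤ ‖v‖ := by
      calc d = infDist v (K : Set X) := hdv.symm
      _ ≤ dist v 0 := infDist_le_dist_of_mem K.zero_mem
      _ = ‖v‖ := by rw [dist_eq_norm, sub_zero]
    have hvlt : ‖v‖ < 2*d := by rw [hv, ← dist_eq_norm]; exact hz
    have hvpos : 0 < ‖v‖ := lt_of_lt_of_le hdpos hvd
    refine ⟨‖v‖⁻¹ • v, ?_, ?_, ?_⟩
    · rw [norm_smul, norm_inv, norm_norm, inv_mul_cancel₀ (ne_of_gt hvpos)]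
    · rw [infDist_smul K v _ (by positivity), hdv]
      have hmono : (2*d)⁻¹ ≤ ‖v‖⁻¹ := inv_anti₀ hvpos hvlt.le
      have h1 : (2*d)⁻¹ * d ≤ ‖v‖⁻¹ * d := mul_le_mul_of_nonneg_right hmono hdpos.le
      have h2 : (2*d)⁻¹ * d = 1/2 := by field_simp
      linarith
    · rw [map_smul, norm_smul, norm_inv, norm_norm, hTv]
      rw [inv_mul_le_iff₀ hvpos]
      calc ‖T x‖ ≤ (1/(k+1)) * d := hx.le
      _ ≤ (1/(k+1)) * ‖v‖ := by
          apply mul_le_mul_of_nonneg_left hvd (by positivity)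
      _ = ‖v‖ * (1/(k+1) : ℝ) := by ring
  choose w hw1 hw2 hw3 using hw
  -- compactness
  obtain ⟨C, hC, hSC⟩ := hS.image_subset_compact_of_bounded (S := closedBall 0 1)
    isBounded_closedBall
  have hmem : ∀ k, S (w k) ∈ C := fun k =>
    hSC ⟨w k, by simp [mem_closedBall, dist_eq_norm, (hw1 k).le], rfl⟩
  obtain ⟨a, _, φ, hφ, hconv⟩ := hC.tendsto_subseq hmem
  have hTlim : Tendsto (fun k => T (w (φ k))) atTop (𝓝 0) := by
    apply squeeze_zero_norm (fun k => hw3 (φ k))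
    have : Tendsto (fun k : ℕ => (1:ℝ)/(φ k + 1)) atTop (𝓝 0) := by
      apply Tendsto.comp (f := fun k : ℕ => φ k) (g := fun m : ℕ => (1:ℝ)/(m+1))
      · exact tendsto_one_div_add_atTop_nhds_zero_nat
      · exact hφ.tendsto_atTop
    exact this
  have hwlim : Tendsto (fun k => w (φ k)) atTop (𝓝 (-a)) := by
    have h0 := hTlim.sub hconv
    have heq : (fun k => T (w (φ k)) - ((fun n => S (w n)) ∘ φ) k) = fun k => w (φ k) := by
      funext k
      show T (w (φ k)) - S (w (φ k)) = w (φ k)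
      rw [one_add_apply0]; abel
    rw [heq] at h0
    simpa using h0
  have hTa : T (-a) = 0 := by
    have h1 : Tendsto (fun k => T (w (φ k))) atTop (𝓝 (T (-a))) :=
      (T.continuous.tendsto _).comp hwlim
    exact tendsto_nhds_unique h1 hTlim
  have haK : (-a) ∈ K := LinearMap.mem_ker.mpr hTa
  have hdist : Tendsto (fun k => infDist (w (φ k)) (K : Set X)) atTop
      (𝓝 (infDist (-a) (K : Set X))) :=
    ((continuous_infDist_pt (K : Set X)).tendsto _).comp hwlim
  rw [infDist_zero_of_mem haK] at hdist
  have : (1:ℝ)/2 ≤ 0 := ge_of_tendsto hdist (Eventually.of_forall (fun k => hw2 (φ k)))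
  linarith

end

section
variable [CompleteSpace X]

lemma isClosed_range_one_add (S : X →L[ℝ] X) (hS : IsCompactOperator ⇑S) :
    IsClosed ((LinearMap.range ((1 + S : X →L[ℝ] X) : X →ₗ[ℝ] X) : Submodule ℝ X) : Set X) := by
  set T := (1 + S : X →L[ℝ] X) with hT
  set K := (LinearMap.ker (T : X →ₗ[ℝ] X) : Submodule ℝ X) with hK
  have hne : (K : Set X).Nonempty := ⟨0, K.zero_mem⟩
  obtain ⟨c, hc, hbb⟩ := one_add_bounded_below S hS
  apply IsSeqClosed.isClosed
  intro u y hu huy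
  choose x hx using hu
  -- bound on ‖u k‖
  have hbdd : BddAbove (Set.range fun k => ‖u k‖) :=
    (huy.norm).bddAbove_range
  obtain ⟨Cu, hCu⟩ := hbdd
  have hCu' : ∀ k, ‖u k‖ ≤ Cu := fun k => hCu ⟨k, rfl⟩
  -- good representatives
  have hrep : ∀ k, ∃ v : X, T v = u k ∧ ‖v‖ ≤ Cu/c + 1 := by
    intro k
    have hd : infDist (x k) (K : Set X) ≤ ‖u k‖ / c := by
      rw [le_div_iff₀ hc, mul_comm]
      rw [← hx k]
      exact hbb (x k)
    obtain ⟨z, hzK, hz⟩ := (infDist_lt_iff hne).mp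
      (show infDist (x k) (K : Set X) < infDist (x k) (K : Set X) + 1 by linarith)
    refine ⟨x k - z, ?_, ?_⟩
    · rw [map_sub, (show T z = 0 from LinearMap.mem_ker.mp hzK), sub_zero, show T (x k) = u k from hx k]
    · rw [← dist_eq_norm]
      have : ‖u k‖ / c ≤ Cu / c := by gcongr; exact hCu' k
      linarith
  choose v hv1 hv2 using hrep
  obtain ⟨C, hCc, hSC⟩ := hS.image_subset_compact_of_bounded (S := closedBall 0 (Cu/c + 1))
    isBounded_closedBall
  have hmem : ∀ k, S (v k) ∈ C := fun k =>
    hSC ⟨v k, by simpa [mem_closedBall, dist_eq_norm] using hv2 k, rfl⟩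
  obtain ⟨a, _, φ, hφ, hconv⟩ := hCc.tendsto_subseq hmem
  have hulim : Tendsto (fun k => u (φ k)) atTop (𝓝 y) := huy.comp hφ.tendsto_atTop
  have hvlim : Tendsto (fun k => v (φ k)) atTop (𝓝 (y - a)) := by
    have h0 := hulim.sub hconv
    have heq : (fun k => u (φ k) - ((fun n => S (v n)) ∘ φ) k) = fun k => v (φ k) := by
      funext k
      show u (φ k) - S (v (φ k)) = v (φ k)
      rw [← hv1 (φ k), one_add_apply0]; abel
    rw [heq] at h0
    exact h0
  refine ⟨y - a, ?_⟩
  have h1 : Tendsto (fun k => T (v (φ k))) atTop (𝓝 (T (y - a))) :=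
    (T.continuous.tendsto _).comp hvlim
  have h2 : Tendsto (fun k => T (v (φ k))) atTop (𝓝 y) := by
    have : (fun k => T (v (φ k))) = fun k => u (φ k) := by
      funext k; exact hv1 (φ k)
    rw [this]; exact hulim
  exact tendsto_nhds_unique h1 h2

end


variable {X : Type*} [NormedAddCommGroup X] [NormedSpace ℝ X] [CompleteSpace X]

lemma surj_of_inj (S : X →L[ℝ] X) (hS : IsCompactOperator ⇑S)
    (hinj : Injective ⇑(1 + S : X →L[ℝ] X)) : Surjective ⇑(1 + S : X →L[ℝ] X) := by
  set T := (1 + S : X →L[ℝ] X) with hT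
  by_contra hsurj
  rw [Function.Surjective] at hsurj
  push_neg at hsurj
  obtain ⟨z, hz⟩ := hsurj
  set D : ℕ → Submodule ℝ X := fun n => LinearMap.range ((T^n : X →L[ℝ] X) : X →ₗ[ℝ] X) with hD
  have hclosed : ∀ n, IsClosed ((D n : Submodule ℝ X) : Set X) := by
    intro n
    obtain ⟨S', hS', heq⟩ := crp_pow S hS n
    have : D n = LinearMap.range ((1 + S' : X →L[ℝ] X) : X →ₗ[ℝ] X) := by rw [hD]; simp only [← heq, hT]
    rw [this]
    exact isClosed_range_one_add S' hS'
  have hstep : ∀ (k : ℕ) (x : X), x ∈ D k → T x ∈ D (k+1) := by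
    rintro k x ⟨y, rfl⟩
    exact ⟨y, by rw [pow_succ']; rfl⟩
  have hmono : ∀ n, D (n+1) ≤ D n := by
    rintro n x ⟨y, rfl⟩
    exact ⟨T y, by rw [pow_succ]; rfl⟩
  have hanti : ∀ m n, m ≤ n → D n ≤ D m := fun m n h =>
    antitone_nat_of_succ_le hmono h
  have hTn_inj : ∀ n, Injective ⇑(T^n) := by
    intro n
    induction n with
    | zero => simpa using injective_id
    | succ n ih =>
      intro a b hab
      rw [pow_succ] at hab
      exact hinj (ih hab)
  have hstrict : ∀ n, ∃ x ∈ D n, x ∉ D (n+1) := by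
    intro n
    refine ⟨(T^n) z, ⟨z, rfl⟩, ?_⟩
    rintro ⟨y, hy⟩
    apply hz y
    apply hTn_inj n
    rw [← hy, pow_succ]; rfl
  have hriesz : ∀ n, ∃ x ∈ D n, ‖x‖ = 1 ∧ ∀ y ∈ D (n+1), (1:ℝ)/2 ≤ ‖x - y‖ := fun n =>
    riesz_in (D n) (D (n+1)) (hclosed n) (hclosed (n+1)) (hmono n) (hstrict n)
  choose x hx1 hx2 hx3 using hriesz
  apply no_sep_seq S hS x (fun n => (hx2 n).le)
  intro m n hmn
  have hw : T (x m) - T (x n) + x n ∈ D (m+1) := by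
    apply Submodule.add_mem
    · exact Submodule.sub_mem _ (hstep m _ (hx1 m))
        (hanti (m+1) (n+1) (by omega) (hstep n _ (hx1 n)))
    · exact hanti (m+1) n (by omega) (hx1 n)
  have hcalc : S (x m) - S (x n) = -(x m - (T (x m) - T (x n) + x n)) := by
    have h1 : T (x m) = x m + S (x m) := one_add_apply0 S (x m)
    have h2 : T (x n) = x n + S (x n) := one_add_apply0 S (x n)
    rw [h1, h2]; abel
  rw [hcalc, norm_neg]
  exact hx3 m _ hw

lemma inj_of_surj (S : X →L[ℝ] X) (hS : IsCompactOperator ⇑S)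
    (hsurj : Surjective ⇑(1 + S : X →L[ℝ] X)) : Injective ⇑(1 + S : X →L[ℝ] X) := by
  set T := (1 + S : X →L[ℝ] X) with hT
  by_contra hinj
  have hker : ∃ x1 : X, x1 ≠ 0 ∧ T x1 = 0 := by
    rw [Function.Injective] at hinj
    push_neg at hinj
    obtain ⟨a, b, hab, hne⟩ := hinj
    exact ⟨a - b, sub_ne_zero.mpr hne, by rw [map_sub, hab, sub_self]⟩
  obtain ⟨x1, hx1ne, hx1⟩ := hker
  set g : X → X := fun y => Classical.choose (hsurj y) with hg
  have hgspec : ∀ y, T (g y) = y := fun y => Classical.choose_spec (hsurj y)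
  set u : ℕ → X := fun n => g^[n] x1 with hu
  have hu0 : u 0 = x1 := rfl
  have husucc : ∀ n, T (u (n+1)) = u n := by
    intro n
    rw [hu]
    simp only [Function.iterate_succ', Function.comp_apply]
    exact hgspec _
  have hun : ∀ n, (T^n) (u n) = x1 := by
    intro n
    induction n with
    | zero => simp [hu0]
    | succ n ih =>
      have : (T^(n+1)) (u (n+1)) = (T^n) (T (u (n+1))) := by rw [pow_succ, ContinuousLinearMap.mul_apply]
      rw [this, husucc n, ih]
  set K : ℕ → Submodule ℝ X := fun n => LinearMap.ker ((T^n : X →L[ℝ] X) : X →ₗ[ℝ] X) with hK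
  have hclosed : ∀ n, IsClosed ((K n : Submodule ℝ X) : Set X) := fun n =>
    (ContinuousLinearMap.isClosed_ker (T^n))
  have hmono : ∀ n, K n ≤ K (n+1) := by
    intro n x hx
    have hx' : (T^n) x = 0 := hx
    show (T^(n+1)) x = 0
    rw [pow_succ', ContinuousLinearMap.mul_apply, hx', map_zero]
  have hmono' : ∀ m n, m ≤ n → K m ≤ K n := fun m n h =>
    monotone_nat_of_le_succ hmono h
  have hstep : ∀ (k : ℕ) (x : X), x ∈ K (k+1) → T x ∈ K k := by
    intro k x hx
    show (T^k) (T x) = 0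
    have : (T^(k+1)) x = 0 := hx
    rw [pow_succ, ContinuousLinearMap.mul_apply] at this
    exact this
  have hstrict : ∀ n, ∃ x ∈ K (n+1), x ∉ K n := by
    intro n
    refine ⟨u n, ?_, ?_⟩
    · show (T^(n+1)) (u n) = 0
      rw [pow_succ', ContinuousLinearMap.mul_apply, hun n, hx1]
    · intro hmem
      exact hx1ne (by rw [← hun n]; exact hmem)
  have hriesz : ∀ n, ∃ x ∈ K (n+1), ‖x‖ = 1 ∧ ∀ y ∈ K n, (1:ℝ)/2 ≤ ‖x - y‖ := fun n =>
    riesz_in (K (n+1)) (K n) (hclosed (n+1)) (hclosed n) (hmono n) (hstrict n)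
  choose x hx1' hx2' hx3' using hriesz
  apply no_sep_seq S hS x (fun n => (hx2' n).le)
  intro m n hmn
  have hw : T (x n) - T (x m) + x m ∈ K n := by
    apply Submodule.add_mem
    · exact Submodule.sub_mem _ (hstep n _ (hx1' n))
        (hmono' m n (by omega) (hstep m _ (hx1' m)))
    · exact hmono' (m+1) n (by omega) (hx1' m)
  have hcalc : S (x m) - S (x n) = x n - (T (x n) - T (x m) + x m) := by
    have h1 : T (x m) = x m + S (x m) := one_add_apply0 S (x m)
    have h2 : T (x n) = x n + S (x n) := one_add_apply0 S (x n)
    rw [h1, h2]; abel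
  rw [hcalc]
  exact hx3' n _ hw


variable {X : Type*} [NormedAddCommGroup X] [NormedSpace ℝ X] [CompleteSpace X]

lemma ker_findim (S : X →L[ℝ] X) (hS : IsCompactOperator ⇑S) :
    FiniteDimensional ℝ (LinearMap.ker ((1 + S : X →L[ℝ] X) : X →ₗ[ℝ] X)) := by
  set T := (1 + S : X →L[ℝ] X) with hT
  set K := (LinearMap.ker (T : X →ₗ[ℝ] X) : Submodule ℝ X) with hK
  obtain ⟨C, hC, hSC⟩ := hS.image_subset_compact_of_bounded (S := closedBall 0 1)
    isBounded_closedBall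
  have hball : ((K : Set X) ∩ closedBall 0 1) ⊆ Neg.neg '' C := by
    rintro x ⟨hxK, hxb⟩
    have hx : x + S x = 0 := by rw [← one_add_apply0 S x]; exact hxK
    have : x = -(S x) := eq_neg_of_add_eq_zero_left hx
    exact ⟨S x, hSC ⟨x, hxb, rfl⟩, this.symm⟩
  have hcompact : IsCompact ((K : Set X) ∩ closedBall 0 1) := by
    apply IsCompact.of_isClosed_subset (hC.image continuous_neg)
    · exact ((ContinuousLinearMap.isClosed_ker T).inter isClosed_closedBall)
    · exact hball
  have hKball : IsCompact (closedBall (0 : K) 1) := by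
    rw [Topology.IsEmbedding.subtypeVal.isCompact_iff]
    have : (Subtype.val '' closedBall (0 : K) 1) = (K : Set X) ∩ closedBall 0 1 := by
      ext x
      constructor
      · rintro ⟨⟨y, hy⟩, hyb, rfl⟩
        refine ⟨hy, ?_⟩
        simpa [mem_closedBall, dist_eq_norm] using hyb
      · rintro ⟨hxK, hxb⟩
        exact ⟨⟨x, hxK⟩, by simpa [mem_closedBall, dist_eq_norm] using hxb, rfl⟩
    rw [this]
    exact hcompact
  exact FiniteDimensional.of_isCompact_closedBall₀ ℝ one_pos hKball

lemma coker_findim (S : X →L[ℝ] X) (hS : IsCompactOperator ⇑S) :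
    FiniteDimensional ℝ (X ⧸ (LinearMap.range ((1 + S : X →L[ℝ] X) : X →ₗ[ℝ] X) : Submodule ℝ X)) := by
  set T := (1 + S : X →L[ℝ] X) with hT
  set R := (LinearMap.range (T : X →ₗ[ℝ] X) : Submodule ℝ X) with hR
  haveI hRc : IsClosed (R : Set X) := isClosed_range_one_add S hS
  obtain ⟨C, hC, hSC⟩ := hS.image_subset_compact_of_bounded (S := closedBall 0 2)
    isBounded_closedBall
  have hmkc : Continuous (Submodule.Quotient.mk (p := R) : X → X ⧸ R) :=
    QuotientAddGroup.continuous_mk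
  have hD : IsCompact ((fun x : X => Submodule.Quotient.mk (p := R) (-x)) '' C) :=
    hC.image (hmkc.comp continuous_neg)
  have hsub : closedBall (0 : X ⧸ R) 1 ⊆ (fun x : X => Submodule.Quotient.mk (p := R) (-x)) '' C := by
    intro ξ hξ
    have hξ1 : ‖ξ‖ ≤ 1 := by simpa [mem_closedBall, dist_eq_norm] using hξ
    obtain ⟨m, hm, hmn⟩ := Submodule.Quotient.norm_mk_lt ξ (ε := 1/2) (by norm_num)
    have hm2 : ‖m‖ ≤ 2 := by linarith
    have hTm : (Submodule.Quotient.mk (p := R) (T m) : X ⧸ R) = 0 :=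
      (Submodule.Quotient.mk_eq_zero R).mpr ⟨m, rfl⟩
    have key : ξ = Submodule.Quotient.mk (p := R) (-(S m)) := by
      have : m - T m = -(S m) := by rw [one_add_apply0]; abel
      calc ξ = Submodule.Quotient.mk (p := R) m := hm.symm
      _ = Submodule.Quotient.mk (p := R) m - Submodule.Quotient.mk (p := R) (T m) := by
          rw [hTm, sub_zero]
      _ = Submodule.Quotient.mk (p := R) (m - T m) := by rw [Submodule.Quotient.mk_sub]
      _ = _ := by rw [this]
    exact ⟨S m, hSC ⟨m, by simpa [mem_closedBall, dist_eq_norm] using hm2, rfl⟩, key.symm⟩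
  have hcpt : IsCompact (closedBall (0 : X ⧸ R) 1) :=
    IsCompact.of_isClosed_subset hD isClosed_closedBall hsub
  exact FiniteDimensional.of_isCompact_closedBall₀ ℝ one_pos hcpt


lemma exists_submodule_finrank_eq {V : Type*} [AddCommGroup V] [Module ℝ V]
    [FiniteDimensional ℝ V] (k : ℕ) (hk : k ≤ Module.finrank ℝ V) :
    ∃ W : Submodule ℝ V, Module.finrank ℝ W = k := by
  set n := Module.finrank ℝ V with hn
  let b := Module.finBasis ℝ V
  have hli : LinearIndependent ℝ (b ∘ Fin.castLE hk) :=
    b.linearIndependent.comp _ (Fin.castLE_injective hk)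
  refine ⟨Submodule.span ℝ (Set.range (b ∘ Fin.castLE hk)), ?_⟩
  rw [finrank_span_eq_card hli, Fintype.card_fin]

variable {X : Type*} [NormedAddCommGroup X] [NormedSpace ℝ X] [CompleteSpace X]

lemma coker_rank_eq_ker_rank (S : X →L[ℝ] X) (hS : IsCompactOperator ⇑S) :
    Module.finrank ℝ (X ⧸ (LinearMap.range ((1 + S : X →L[ℝ] X) : X →ₗ[ℝ] X) : Submodule ℝ X))
      = Module.finrank ℝ (LinearMap.ker ((1 + S : X →L[ℝ] X) : X →ₗ[ℝ] X)) := by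
  set T := (1 + S : X →L[ℝ] X) with hT
  set K := (LinearMap.ker (T : X →ₗ[ℝ] X) : Submodule ℝ X) with hKdef
  set R := (LinearMap.range (T : X →ₗ[ℝ] X) : Submodule ℝ X) with hRdef
  haveI hKfd : FiniteDimensional ℝ K := ker_findim S hS
  haveI hQfd : FiniteDimensional ℝ (X ⧸ R) := coker_findim S hS
  obtain ⟨π, hπ⟩ := (Submodule.ClosedComplemented.of_finiteDimensional K :
    K.ClosedComplemented)
  have hTk : ∀ k : K, T (k : X) = 0 := fun k => k.2
  have hqT : ∀ x : X, R.mkQ (T x) = 0 := fun x =>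
    (Submodule.Quotient.mk_eq_zero R).mpr ⟨x, rfl⟩
  -- the Fredholm alternative transfers to any linear map β : K →ₗ X ⧸ R
  have halt : ∀ β : K →ₗ[ℝ] (X ⧸ R), Injective β ↔ Surjective β := by
    intro β
    obtain ⟨A, hA⟩ := Module.projective_lifting_property R.mkQ β R.mkQ_surjective
    have hqA : ∀ k : K, R.mkQ (A k) = β k := fun k => LinearMap.ext_iff.mp hA k
    let Acl : K →L[ℝ] X := LinearMap.toContinuousLinearMap A
    have hAcl : ∀ k : K, Acl k = A k := fun k => rfl
    let F : X →L[ℝ] X := Acl.comp π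
    have hFap : ∀ x : X, F x = A (π x) := fun x => rfl
    have hFc : IsCompactOperator ⇑F := by
      haveI : ProperSpace K := FiniteDimensional.proper ℝ K
      refine ⟨Acl '' Metric.closedBall 0 ‖π‖, (isCompact_closedBall _ _).image Acl.continuous, ?_⟩
      apply Filter.mem_of_superset (Metric.closedBall_mem_nhds (0 : X) one_pos)
      intro x hx
      have hx1 : ‖x‖ ≤ 1 := by simpa [Metric.mem_closedBall, dist_eq_norm] using hx
      refine ⟨π x, ?_, rfl⟩
      simp only [Metric.mem_closedBall, dist_eq_norm, sub_zero]
      calc ‖π x‖ ≤ ‖π‖ * ‖x‖ := π.le_opNorm x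
      _ ≤ ‖π‖ * 1 := by
          exact mul_le_mul_of_nonneg_left hx1 (norm_nonneg π)
      _ = ‖π‖ := mul_one _
    set T' := (1 + (S + F) : X →L[ℝ] X) with hT'
    have hSFc : IsCompactOperator ⇑(S + F) := by
      have : ⇑(S + F) = ⇑S + ⇑F := by funext x; simp [ContinuousLinearMap.add_apply]
      rw [this]; exact hS.add hFc
    have hT'ap : ∀ x : X, T' x = T x + F x := by
      intro x
      rw [hT', one_add_apply0, hT, one_add_apply0, ContinuousLinearMap.add_apply]
      abel
    have hinj_of_ker : ∀ (f : X →L[ℝ] X), (∀ x, f x = 0 → x = 0) → Injective ⇑f := by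
      intro f h a b hab
      have : f (a - b) = 0 := by rw [map_sub, hab, sub_self]
      exact sub_eq_zero.mp (h _ this)
    constructor
    · -- injective β → surjective β
      intro hβ
      have hT'inj : Injective ⇑T' := by
        apply hinj_of_ker
        intro x hx
        have h1 : T x + F x = 0 := by rw [← hT'ap]; exact hx
        have h2 : β (π x) = 0 := by
          have := congrArg R.mkQ h1
          rw [map_add, map_zero, hqT, zero_add, hFap, hqA] at this
          exact this
        have h3 : π x = 0 := by
          apply hβ
          rw [h2, map_zero]
        have h4 : T x = 0 := by
          rw [hFap, h3, map_zero, add_zero] at h1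
          exact h1
        have h5 : π x = ⟨x, h4⟩ := hπ ⟨x, h4⟩
        rw [h3] at h5
        exact (congrArg Subtype.val h5.symm : x = (0 : K))
      have hT'surj : Surjective ⇑T' := surj_of_inj (S + F) hSFc hT'inj
      -- surjectivity of β
      intro ξ
      obtain ⟨z, hz⟩ := R.mkQ_surjective ξ
      obtain ⟨x, hx⟩ := hT'surj z
      refine ⟨π x, ?_⟩
      rw [← hz, ← hx, hT'ap, map_add, hqT, zero_add, hFap, hqA]
    · -- surjective β → injective β
      intro hβ
      have hT'surj : Surjective ⇑T' := by
        intro z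
        obtain ⟨k, hk⟩ := hβ (R.mkQ z)
        have hzAk : z - A k ∈ R := by
          rw [← Submodule.Quotient.mk_eq_zero R]
          show R.mkQ (z - A k) = 0
          have h9 : R.mkQ (z - A k) = R.mkQ z - R.mkQ (A k) := map_sub _ _ _
          rw [h9, hqA, hk, sub_self]
        obtain ⟨x', hx'⟩ := hzAk
        refine ⟨x' + ((k - π x' : K) : X), ?_⟩
        rw [hT'ap, map_add, hFap]
        have h1 : T ((( k - π x' : K) : X)) = 0 := hTk _
        have h2 : π (x' + ((k - π x' : K) : X)) = k := by
          rw [map_add, hπ (k - π x')]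
          simp
        rw [h1, add_zero, h2, show T x' = z - A k from hx']
        simp
      have hT'inj : Injective ⇑T' := inj_of_surj (S + F) hSFc hT'surj
      -- injectivity of β
      apply (injective_iff_map_eq_zero β).mpr
      intro k hk
      have hAkR : A k ∈ R := by
        rw [← Submodule.Quotient.mk_eq_zero R]
        show R.mkQ (A k) = 0
        rw [hqA, hk]
      obtain ⟨x', hx'⟩ := hAkR
      set x := (k : X) - x' + ((π x' : K) : X) with hxdef
      have hπx : π x = k := by
        rw [hxdef, map_add, map_sub, hπ k, hπ (π x')]
        abel
      have hTx : T x = -(A k) := by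
        rw [hxdef, map_add, map_sub, hTk k, hTk (π x'), show T x' = A k from hx']
        abel
      have hT'x : T' x = 0 := by
        rw [hT'ap, hTx, hFap, hπx]
        abel
      have hx0 : x = 0 := hT'inj (by rw [hT'x, map_zero])
      rw [← hπx, hx0, map_zero]
  -- now compare dimensions
  set n := Module.finrank ℝ K with hn
  set m := Module.finrank ℝ (X ⧸ R) with hm
  rcases lt_trichotomy m n with hlt | heq | hgt
  · -- m < n : build surjective non-injective β
    exfalso
    obtain ⟨K', hK'⟩ := exists_submodule_finrank_eq (V := K) m (by omega)
    obtain ⟨C, hC⟩ := Submodule.exists_isCompl K'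
    obtain ⟨ε⟩ := FiniteDimensional.nonempty_linearEquiv_of_finrank_eq
      (hK'.trans hm : Module.finrank ℝ K' = Module.finrank ℝ (X ⧸ R))
    set β := (ε : K' →ₗ[ℝ] (X ⧸ R)).comp (K'.linearProjOfIsCompl C hC) with hβdef
    have hβsurj : Surjective β := by
      intro ξ
      refine ⟨(ε.symm ξ : K' ), ?_⟩
      rw [hβdef]
      simp [Submodule.linearProjOfIsCompl, Submodule.projectionOnto_apply_left hC]
    have hβinj : Injective β := (halt β).mpr hβsurj
    -- C is nontrivial
    have hCrank : Module.finrank ℝ C = n - m := by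
      have := Submodule.finrank_add_eq_of_isCompl hC
      omega
    have hCne : ∃ c : C, (c : K) ≠ 0 := by
      by_contra hc
      push_neg at hc
      have : Module.finrank ℝ C = 0 := by
        have : ∀ c : C, c = 0 := fun c => Subtype.ext (by simpa using hc c)
        have hsub : Subsingleton C := ⟨fun a b => by rw [this a, this b]⟩
        exact Module.finrank_zero_of_subsingleton
      omega
    obtain ⟨c, hc⟩ := hCne
    have : β (c : K) = 0 := by
      rw [hβdef]
      simp [Submodule.linearProjOfIsCompl, Submodule.projectionOnto_apply_of_mem_right hC c.2]
    have := hβinj (by rw [this, map_zero] : β (c : K) = β 0)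
    exact hc this
  · exact heq
  · -- n < m : build injective non-surjective β
    exfalso
    obtain ⟨Q', hQ'⟩ := exists_submodule_finrank_eq (V := X ⧸ R) n (by omega)
    obtain ⟨ε⟩ := FiniteDimensional.nonempty_linearEquiv_of_finrank_eq
      (hn.symm.trans hQ'.symm : Module.finrank ℝ K = Module.finrank ℝ Q')
    set β := Q'.subtype.comp (ε : K →ₗ[ℝ] Q') with hβdef
    have hβinj : Injective β := by
      intro a b hab
      apply ε.injective
      exact Subtype.ext hab
    have hβsurj : Surjective β := (halt β).mp hβinj
    have hQtop : Q' = ⊤ := by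
      rw [Submodule.eq_top_iff']
      intro ξ
      obtain ⟨k, hk⟩ := hβsurj ξ
      rw [← hk]
      exact (ε k).2
    have : m = n := by
      rw [hm, ← finrank_top ℝ (X ⧸ R), ← hQtop, hQ']
    omega

end C
lemma key_lift {X Y : Type*} [NormedAddCommGroup X] [NormedSpace ℝ X] [CompleteSpace X]
    [NormedAddCommGroup Y] [NormedSpace ℝ Y] [CompleteSpace Y]
    (j : Y →L[ℝ] X) (hjinj : Function.Injective ⇑j) (hjd : DenseRange ⇑j)
    (S : X →L[ℝ] X) (Tc : Y →L[ℝ] Y) (hS : IsCompactOperator ⇑S) (hT : IsCompactOperator ⇑Tc)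
    (hint : ∀ y, j (Tc y) = S (j y)) :
    ∀ x : X, x + S x = 0 → x ∈ Set.range ⇑j := by
  set TX := (1 + S : X →L[ℝ] X) with hTX
  set TY := (1 + Tc : Y →L[ℝ] Y) with hTY
  set KX := (LinearMap.ker (TX : X →ₗ[ℝ] X) : Submodule ℝ X) with hKX
  set KY := (LinearMap.ker (TY : Y →ₗ[ℝ] Y) : Submodule ℝ Y) with hKY
  set RX := (LinearMap.range (TX : X →ₗ[ℝ] X) : Submodule ℝ X) with hRX
  set RY := (LinearMap.range (TY : Y →ₗ[ℝ] Y) : Submodule ℝ Y) with hRY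
  haveI : FiniteDimensional ℝ KX := ker_findim S hS
  haveI : FiniteDimensional ℝ KY := ker_findim Tc hT
  haveI : FiniteDimensional ℝ (X ⧸ RX) := coker_findim S hS
  haveI : FiniteDimensional ℝ (Y ⧸ RY) := coker_findim Tc hT
  haveI hRXc : IsClosed (RX : Set X) := isClosed_range_one_add S hS
  have hintT : ∀ y : Y, j (TY y) = TX (j y) := by
    intro y
    rw [hTY, hTX, one_add_apply0, one_add_apply0, map_add, hint]
  -- Step A : finrank KY ≤ finrank KX
  have hjker : ∀ y : KY, j (y : Y) ∈ KX := by
    intro y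
    show TX (j (y : Y)) = 0
    rw [← hintT, (show TY (y : Y) = 0 from y.2), map_zero]
  set ρ : KY →ₗ[ℝ] KX :=
    ((j : Y →ₗ[ℝ] X).comp KY.subtype).codRestrict KX (fun y => hjker y) with hρ
  have hρinj : Function.Injective ρ := by
    intro a b hab
    apply Subtype.ext
    apply hjinj
    exact congrArg Subtype.val hab
  have hA : Module.finrank ℝ KY ≤ Module.finrank ℝ KX :=
    LinearMap.finrank_le_finrank_of_injective hρinj
  -- Step B : finrank (X ⧸ RX) ≤ finrank (Y ⧸ RY)
  set ψ : Y →ₗ[ℝ] (X ⧸ RX) := RX.mkQ.comp (j : Y →ₗ[ℝ] X) with hψ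
  have hψker : RY ≤ LinearMap.ker ψ := by
    rintro _ ⟨y, rfl⟩
    show RX.mkQ (j (TY y)) = 0
    rw [hintT, Submodule.mkQ_apply, Submodule.Quotient.mk_eq_zero]
    exact ⟨j y, rfl⟩
  set ψbar := RY.liftQ ψ hψker with hψbar
  have hψsurj : Function.Surjective ψ := by
    have hmkc : Continuous (⇑RX.mkQ : X → X ⧸ RX) := QuotientAddGroup.continuous_mk
    have hmkd : DenseRange (⇑RX.mkQ : X → X ⧸ RX) := RX.mkQ_surjective.denseRange
    have hdense : DenseRange (⇑RX.mkQ ∘ ⇑j) := hmkd.comp hjd hmkc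
    have hrange : (LinearMap.range ψ : Set (X ⧸ RX)) = Set.range (⇑RX.mkQ ∘ ⇑j) := by
      ext ξ; constructor
      · rintro ⟨y, rfl⟩; exact ⟨y, rfl⟩
      · rintro ⟨y, rfl⟩; exact ⟨y, rfl⟩
    have hclosed : IsClosed ((LinearMap.range ψ : Submodule ℝ (X ⧸ RX)) : Set (X ⧸ RX)) :=
      Submodule.closed_of_finiteDimensional _
    have htop : (LinearMap.range ψ : Set (X ⧸ RX)) = Set.univ := by
      have := hdense.closure_eq
      rw [← hrange] at this
      rw [← hclosed.closure_eq]
      exact this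
    intro ξ
    have : ξ ∈ (LinearMap.range ψ : Set (X ⧸ RX)) := htop ▸ Set.mem_univ ξ
    exact this
  have hψbarsurj : Function.Surjective ψbar := by
    intro ξ
    obtain ⟨y, hy⟩ := hψsurj ξ
    exact ⟨RY.mkQ y, by rw [hψbar]; simpa using hy⟩
  have hB : Module.finrank ℝ (X ⧸ RX) ≤ Module.finrank ℝ (Y ⧸ RY) := by
    have h1 : LinearMap.range ψbar = ⊤ := LinearMap.range_eq_top.mpr hψbarsurj
    have h2 := LinearMap.finrank_range_le ψbar
    rw [h1] at h2
    rwa [finrank_top] at h2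
  -- combine
  have hCX := coker_rank_eq_ker_rank S hS
  have hCY := coker_rank_eq_ker_rank Tc hT
  rw [← hTX, ← hKX, ← hRX] at hCX
  rw [← hTY, ← hKY, ← hRY] at hCY
  have heq : Module.finrank ℝ KY = Module.finrank ℝ KX := by omega
  have hρsurj : Function.Surjective ρ :=
    (LinearMap.injective_iff_surjective_of_finrank_eq_finrank heq).mp hρinj
  intro x hx
  have hxK : x ∈ KX := by
    show TX x = 0
    rw [hTX, one_add_apply0, hx]
  obtain ⟨y, hy⟩ := hρsurj ⟨x, hxK⟩
  exact ⟨(y : Y), congrArg Subtype.val hy⟩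

end FredholmTheory

/-- Functional analytic lemma: for a scale of Banach spaces `B l` with continuous
injective embeddings `j l : B (l+1) ↪ B l` (composites into `B 0` given by `e l`),
dense intersection, and a linear operator `R` on `B 0` restricting to a compact
endomorphism `Rl l` of each `B l`, the kernel of `I + R` lies in `⋂ l, B l`. -/
theorem stmt_0
    (B : ℕ → Type*) [∀ l, NormedAddCommGroup (B l)] [∀ l, NormedSpace ℝ (B l)]
    [∀ l, CompleteSpace (B l)]
    (j : ∀ l, B (l + 1) →L[ℝ] B l)
    (hj : ∀ l, Function.Injective (j l))
    (e : ∀ l, B l →L[ℝ] B 0)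
    (he0 : e 0 = ContinuousLinearMap.id ℝ (B 0))
    (heS : ∀ l, e (l + 1) = (e l).comp (j l))
    (hdense : ∀ l, Dense {x : B l | e l x ∈ ⋂ μ, Set.range (e μ)})
    (R : B 0 →ₗ[ℝ] B 0)
    (Rl : ∀ l, B l →ₗ[ℝ] B l)
    (hcomm : ∀ l (x : B l), e l (Rl l x) = R (e l x))
    (hRc : ∀ l, IsCompactOperator (Rl l)) :
    ∀ u : B 0, u + R u = 0 → ∀ l, u ∈ Set.range (e l) := by
  have heinj : ∀ l, Function.Injective ⇑(e l) := by
    intro l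
    induction l with
    | zero => rw [he0]; exact fun a b h => h
    | succ l ih =>
      rw [heS l]
      exact ih.comp (hj l)
  -- continuous linear versions of Rl
  set Rc : ∀ l, B l →L[ℝ] B l := fun l => ⟨Rl l, (hRc l).continuous⟩ with hRcdef
  have hRcoe : ∀ l, ⇑(Rc l) = ⇑(Rl l) := fun l => rfl
  have hRcc : ∀ l, IsCompactOperator ⇑(Rc l) := fun l => by rw [hRcoe]; exact hRc l
  intro u hu l
  induction l with
  | zero => exact ⟨u, by rw [he0]; rfl⟩
  | succ l ih =>
    obtain ⟨x, hx⟩ := ih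
    have hxker : x + Rl l x = 0 := by
      apply heinj l
      rw [map_add, map_zero, hcomm l x, hx, hu]
    have hjd : DenseRange ⇑(j l) := by
      apply (hdense l).mono
      intro x' hx'
      have hx'' : e l x' ∈ Set.range (e (l+1)) := Set.mem_iInter.mp hx' (l+1)
      obtain ⟨z, hz⟩ := hx''
      rw [heS l] at hz
      exact ⟨z, heinj l hz⟩
    have hint : ∀ y : B (l+1), (j l) ((Rc (l+1)) y) = (Rc l) ((j l) y) := by
      intro y
      apply heinj l
      calc e l (j l (Rc (l+1) y)) = e (l+1) (Rl (l+1) y) := by rw [heS l]; rfl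
      _ = R (e (l+1) y) := hcomm (l+1) y
      _ = R (e l (j l y)) := by rw [heS l]; rfl
      _ = e l (Rl l (j l y)) := (hcomm l _).symm
      _ = e l (Rc l (j l y)) := rfl
    have hxrange : x ∈ Set.range ⇑(j l) := by
      apply key_lift (j l) (hj l) hjd (Rc l) (Rc (l+1)) (hRcc l) (hRcc (l+1)) hint x
      rw [hRcoe]
      exact hxker
    obtain ⟨z, hz⟩ := hxrange
    refine ⟨z, ?_⟩
    rw [heS l]
    show e l (j l z) = u
    rw [hz, hx]
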